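/- Let G be a group acting by homeomorphisms on a compact metrizable space M as a non-elementary convergence group. If there exist an element f ∈ G and an open set U ⊂ M such that the image of the closure of U under f is a proper subset of U, then f is a hyperbolic element (i.e., f has infinite order and exactly two fixed points in M). -/

import Mathlib

open Filter Topology Set

/-- A (discrete) group `G` acting by homeomorphisms on a compact metrizable space `M`
is a *convergence group* if every sequence of distinct elements has a subsequence
converging locally uniformly to a constant off a point. -/
def ConvergenceAction (G : Type*) (M : Type*) [Group G] [MetricSpace M] [CompactSpace M]
    [MulAction G M] [ContinuousConstSMul G M] : Prop :=
  ∀ g : ℕ → G, Function.Injective g →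
    ∃ (k : ℕ → ℕ) (a b : M), StrictMono k ∧
      TendstoLocallyUniformlyOn (fun n x => g (k n) • x) (fun _ => b) atTop {a}ᶜ

/-- The limit set: accumulation points of orbits along sequences of distinct elements. -/
def limitSet (G : Type*) (M : Type*) [Group G] [MetricSpace M] [CompactSpace M]
    [MulAction G M] : Set M :=
  {x | ∃ (y : M) (g : ℕ → G), Function.Injective g ∧
    Tendsto (fun n => g n • y) atTop (𝓝 x)}

/-- The action is non-elementary if the limit set has more than two points. -/
def NonElementaryAction (G : Type*) (M : Type*) [Group G] [MetricSpace M] [CompactSpace M]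
    [MulAction G M] : Prop :=
  ∃ a ∈ limitSet G M, ∃ b ∈ limitSet G M, ∃ c ∈ limitSet G M, a ≠ b ∧ b ≠ c ∧ a ≠ c

open Pointwise


/-- Any smul-invariant set is invariant under all powers. -/
lemma auxPowSmul {G M : Type*} [Group G] [MulAction G M] {g : G} {S : Set M}
    (h : g • S = S) : ∀ m : ℕ, g ^ m • S = S := by
  intro m
  induction m with
  | zero => simp
  | succ n ih => rw [pow_succ, mul_smul, h, ih]

/-- Existence of a point avoiding two given points, provided there are 3 distinct points. -/
lemma auxExists {M : Type*} (p q r : M) (hpq : p ≠ q) (hqr : q ≠ r) (hpr : p ≠ r)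
    (c d : M) : ∃ x, x ≠ c ∧ x ≠ d := by
  by_contra hcon
  push_neg at hcon
  have h : ∀ x : M, x = c ∨ x = d := fun x => or_iff_not_imp_left.mpr (hcon x)
  rcases h p with hp | hp <;> rcases h q with hq | hq <;> rcases h r with hr | hr <;> simp_all

/-- Core construction: nested intersection of images. -/
lemma auxCore {G M : Type*} [Group G] [MetricSpace M] [CompactSpace M]
    [MulAction G M] [ContinuousConstSMul G M]
    (g : G) (C : Set M) (hC : IsClosed C) (hCne : C.Nonempty) (hgC : g • C ⊆ C) :
    ∃ K : Set M, K.Nonempty ∧ IsCompact K ∧ K ⊆ g • C ∧ g • K = K := by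
  set T : ℕ → Set M := fun n => g ^ (n + 1) • C with hT
  have hstep : ∀ n : ℕ, g ^ (n + 1) • (g • C) = T (n + 1) := by
    intro n; rw [hT]; dsimp only; rw [← mul_smul, ← pow_succ]
  have hdec : ∀ n, T (n + 1) ⊆ T n := by
    intro n
    rw [← hstep n]
    exact (smul_set_mono hgC)
  have hcpt : ∀ n, IsCompact (T n) := by
    intro n
    have h1 : IsCompact ((g ^ (n + 1) • ·) '' C) :=
      (hC.isCompact).image (continuous_const_smul _)
    simpa [hT] using h1
  have hne : ∀ n, (T n).Nonempty := fun n => hCne.smul_set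
  have hKne : (⋂ n, T n).Nonempty :=
    IsCompact.nonempty_iInter_of_sequence_nonempty_isCompact_isClosed T hdec hne (hcpt 0)
      (fun n => (hcpt n).isClosed)
  refine ⟨⋂ n, T n, hKne, ?_, ?_, ?_⟩
  · exact (hcpt 0).of_isClosed_subset (isClosed_iInter fun n => (hcpt n).isClosed)
      (iInter_subset T 0)
  · have : T 0 = g • C := by rw [hT]; dsimp only; rw [pow_one]
    exact this ▸ iInter_subset T 0
  · have h1 : g • ⋂ n, T n = ⋂ n, g • T n := smul_set_iInter g T
    have h2 : ∀ n, g • T n = T (n + 1) := by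
      intro n; rw [hT]; dsimp only; rw [← mul_smul, ← pow_succ']
    rw [h1]
    have h3 : ⋂ n, g • T n = ⋂ n, T (n + 1) := by
      exact iInter_congr h2
    rw [h3]
    apply Subset.antisymm
    · intro x hx
      simp only [mem_iInter] at hx ⊢
      intro n
      exact hdec n (hx n)
    · intro x hx
      simp only [mem_iInter] at hx ⊢
      intro n
      exact hx (n + 1)

/-- Singleton lemma: a nonempty compact set invariant under the `f^(k n)` and avoiding `a`
must equal `{b}`. -/
lemma auxSingleton {G M : Type*} [Group G] [MetricSpace M] [CompactSpace M]
    [MulAction G M] [ContinuousConstSMul G M]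
    {f : G} {k : ℕ → ℕ} {a b : M}
    (htl : TendstoLocallyUniformlyOn (fun n x => f ^ (k n) • x) (fun _ => b) atTop {a}ᶜ)
    {C : Set M} (hCc : IsCompact C) (hCne : C.Nonempty)
    (hinv : ∀ n : ℕ, f ^ (k n) • C = C) (ha : a ∉ C) : C = {b} := by
  have hCsub : C ⊆ {a}ᶜ := by
    intro x hx h
    rw [mem_singleton_iff] at h
    exact ha (h ▸ hx)
  have hu : TendstoUniformlyOn (fun n x => f ^ (k n) • x) (fun _ => b) atTop C :=
    (tendstoLocallyUniformlyOn_iff_forall_isCompact isOpen_compl_singleton).mp htl C hCsub hCc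
  rw [Metric.tendstoUniformlyOn_iff] at hu
  have hmem : ∀ x ∈ C, x = b := by
    intro x hx
    have key : ∀ ε : ℝ, 0 < ε → dist b x ≤ ε := by
      intro ε hε
      obtain ⟨n, hn⟩ := (hu ε hε).exists
      have hx' : x ∈ f ^ (k n) • C := (hinv n).symm ▸ hx
      obtain ⟨y, hy, rfl⟩ := hx'
      exact le_of_lt (hn y hy)
    have : b = x := eq_of_forall_dist_le key
    exact this.symm
  apply Subset.antisymm
  · intro x hx; exact hmem x hx
  · intro x hx
    obtain ⟨y, hy⟩ := hCne
    rw [mem_singleton_iff.mp hx, ← hmem y hy]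
    exact hy


theorem stmt0' {G M : Type*} [Group G] [MetricSpace M] [CompactSpace M]
    [MulAction G M] [ContinuousConstSMul G M]
    (hconv : ∀ g : ℕ → G, Function.Injective g →
      ∃ (k : ℕ → ℕ) (a b : M), StrictMono k ∧
        TendstoLocallyUniformlyOn (fun n x => g (k n) • x) (fun _ => b) atTop {a}ᶜ)
    (p q r : M) (hpq : p ≠ q) (hqr : q ≠ r) (hpr : p ≠ r)
    (f : G) (U : Set M) (hU : IsOpen U) (hsub : (f • ·) '' closure U ⊂ U) :
    ¬ IsOfFinOrder f ∧ ∃ a b : M, a ≠ b ∧ {x : M | f • x = x} = {a, b} := by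
  classical
  have hsub' : f • closure U ⊂ U := by rwa [Set.image_smul] at hsub
  have hfc : f • closure U ⊆ U := hsub'.subset
  have hfne : f • closure U ≠ U := hsub'.ne
  -- nonemptiness
  obtain ⟨z, hzU, -⟩ := exists_of_ssubset hsub'
  have hUne : U.Nonempty := ⟨z, hzU⟩
  have hclne : (closure U).Nonempty := hUne.closure
  have hUcne : Uᶜ.Nonempty := by
    by_contra h
    rw [not_nonempty_iff_eq_empty, compl_empty_iff] at h
    subst h
    rw [closure_univ, smul_set_univ] at hfne
    exact hfne rfl
  -- invariance of closure U under powers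
  have hpowsub : ∀ n : ℕ, f ^ n • closure U ⊆ closure U := by
    intro n
    induction n with
    | zero => simp
    | succ m ih =>
      rw [pow_succ, mul_smul]
      exact (smul_set_mono (hfc.trans subset_closure)).trans ih
  -- infinite order
  have hnotfin : ¬ IsOfFinOrder f := by
    intro hfin
    obtain ⟨n, hn, hfn⟩ := isOfFinOrder_iff_pow_eq_one.mp hfin
    obtain ⟨m, rfl⟩ := Nat.exists_eq_succ_of_ne_zero hn.ne'
    have h1 : closure U ⊆ f • closure U := by
      have h2 : f ^ (m + 1) • closure U ⊆ f • closure U := by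
        rw [pow_succ', mul_smul]
        exact smul_set_mono (hpowsub m)
      rwa [hfn, one_smul] at h2
    exact hfne (Subset.antisymm hfc (subset_closure.trans h1))
  have hinj : Function.Injective (fun n : ℕ => f ^ n) :=
    injective_pow_iff_not_isOfFinOrder.mpr hnotfin
  -- apply convergence
  obtain ⟨k, a, b, hk, htl⟩ := hconv (fun n => f ^ n) hinj
  -- the two invariant compacta
  obtain ⟨K, hKne, hKc, hKsub, hKinv⟩ :=
    auxCore f (closure U) isClosed_closure hclne (hfc.trans subset_closure)
  have hKU : K ⊆ U := hKsub.trans hfc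
  have hfc' : f⁻¹ • Uᶜ ⊆ (closure U)ᶜ := by
    intro x hx hxc
    obtain ⟨y, hy, hyx⟩ := hx
    have : f • x ∈ U := hfc ⟨x, hxc, rfl⟩
    rw [← hyx, smul_inv_smul] at this
    exact hy this
  obtain ⟨K', hK'ne, hK'c, hK'sub, hK'inv⟩ :=
    auxCore f⁻¹ Uᶜ hU.isClosed_compl hUcne (hfc'.trans (compl_subset_compl.mpr subset_closure))
  have hK'cl : K' ⊆ (closure U)ᶜ := hK'sub.trans hfc'
  have hdisj : ∀ x, x ∈ K → x ∈ K' → False := by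
    intro x hxK hxK'
    exact hK'cl hxK' (subset_closure (hKU hxK))
  have hK'finv : f • K' = K' := by
    have := congrArg (fun S => f • S) hK'inv
    rw [← mul_smul, mul_inv_cancel, one_smul] at this
    exact this.symm
  have hKpow : ∀ n : ℕ, f ^ (k n) • K = K := fun n => auxPowSmul hKinv (k n)
  have hK'pow : ∀ n : ℕ, f ^ (k n) • K' = K' := fun n => auxPowSmul hK'finv (k n)
  -- a ≠ b
  have habne : a ≠ b := by
    intro h
    subst h
    by_cases haK : a ∈ K
    · have haK' : a ∉ K' := fun h' => hdisj a haK h'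
      have : K' = {a} := auxSingleton htl hK'c hK'ne hK'pow haK'
      exact haK' (this ▸ rfl)
    · have : K = {a} := auxSingleton htl hKc hKne hKpow haK
      exact haK (this ▸ rfl)
  -- b is fixed
  have hbfix : f • b = b := by
    obtain ⟨x, hxa, hxfa⟩ := auxExists p q r hpq hqr hpr a (f⁻¹ • a)
    have hfxa : f • x ≠ a := by
      intro h
      exact hxfa (by rw [← h, inv_smul_smul])
    have h1 : Tendsto (fun n => f ^ (k n) • x) atTop (𝓝 b) := htl.tendsto_at hxa
    have h2 : Tendsto (fun n => f ^ (k n) • (f • x)) atTop (𝓝 b) := htl.tendsto_at hfxa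
    have h3 : Tendsto (fun n => f • (f ^ (k n) • x)) atTop (𝓝 (f • b)) := h1.const_smul f
    have heq : (fun n => f • (f ^ (k n) • x)) = fun n => f ^ (k n) • (f • x) := by
      funext n
      rw [smul_smul, smul_smul, ← pow_succ', ← pow_succ]
    rw [heq] at h3
    exact tendsto_nhds_unique h3 h2
  -- duality: inverses converge to a
  obtain ⟨k', a', b', hk', htl'⟩ := hconv (fun n => (f ^ (k n))⁻¹)
    (fun m n h => hk.injective (hinj (inv_injective h)))
  have hb'a : b' = a := by
    by_contra hb'ne
    have hε : 0 < dist a b' := dist_pos.mpr (Ne.symm hb'ne)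
    set N : Set M := Metric.closedBall b' (dist a b' / 2) with hN
    have hNc : IsCompact N := Metric.isClosed_closedBall.isCompact
    have hNsub : N ⊆ {a}ᶜ := by
      intro y hy hmem
      rw [mem_singleton_iff] at hmem
      rw [hmem] at hy
      have h6 : dist a b' ≤ dist a b' / 2 := Metric.mem_closedBall.mp hy
      linarith
    have hu : TendstoUniformlyOn (fun n x => f ^ (k n) • x) (fun _ => b) atTop N :=
      (tendstoLocallyUniformlyOn_iff_forall_isCompact isOpen_compl_singleton).mp htl N hNsub hNc
    rw [Metric.tendstoUniformlyOn_iff] at hu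
    have claim : ∀ x : M, x ≠ a' → x = b := by
      intro x hx
      have hxy : Tendsto (fun n => (f ^ (k (k' n)))⁻¹ • x) atTop (𝓝 b') := htl'.tendsto_at hx
      have key : ∀ ε : ℝ, 0 < ε → dist b x ≤ ε := by
        intro ε hεp
        have E1 : ∀ᶠ n in atTop, ∀ y ∈ N, dist b (f ^ (k (k' n)) • y) < ε := by
          exact (hk'.tendsto_atTop).eventually (hu ε hεp)
        have E2 : ∀ᶠ n in atTop, (f ^ (k (k' n)))⁻¹ • x ∈ N :=
          hxy (Metric.closedBall_mem_nhds b' (by linarith))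
        obtain ⟨n, hn1, hn2⟩ := (E1.and E2).exists
        have h5 := hn1 _ hn2
        rw [smul_inv_smul] at h5
        exact h5.le
      exact (eq_of_forall_dist_le key).symm
    have h1 := claim
    obtain ⟨x, hx1, hx2⟩ := auxExists p q r hpq hqr hpr a' b
    exact hx2 (claim x hx1)
  rw [hb'a] at htl'
  -- a is fixed
  have hafix : f • a = a := by
    obtain ⟨x, hxa, hxfa⟩ := auxExists p q r hpq hqr hpr a' (f • a')
    have hfxa : f⁻¹ • x ≠ a' := by
      intro h
      apply hxfa
      rw [← h, smul_inv_smul]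
    have h1 : Tendsto (fun n => (f ^ (k (k' n)))⁻¹ • x) atTop (𝓝 a) := htl'.tendsto_at hxa
    have h2 : Tendsto (fun n => (f ^ (k (k' n)))⁻¹ • (f⁻¹ • x)) atTop (𝓝 a) :=
      htl'.tendsto_at hfxa
    have h3 : Tendsto (fun n => f⁻¹ • ((f ^ (k (k' n)))⁻¹ • x)) atTop (𝓝 (f⁻¹ • a)) :=
      h1.const_smul f⁻¹
    have heq : (fun n => f⁻¹ • ((f ^ (k (k' n)))⁻¹ • x))
        = fun n => (f ^ (k (k' n)))⁻¹ • (f⁻¹ • x) := by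
      funext n
      rw [smul_smul, smul_smul, ← mul_inv_rev, ← mul_inv_rev, ← pow_succ, ← pow_succ']
    rw [heq] at h3
    have h4 : f⁻¹ • a = a := tendsto_nhds_unique h3 h2
    have := congrArg (fun y => f • y) h4
    rw [smul_inv_smul] at this
    exact this.symm
  refine ⟨hnotfin, a, b, habne, ?_⟩
  ext x
  simp only [mem_setOf_eq, mem_insert_iff, mem_singleton_iff]
  constructor
  · intro hx
    by_cases hxa : x = a
    · exact Or.inl hxa
    · right
      have hpt : ∀ m : ℕ, f ^ m • x = x := by
        intro m
        induction m with
        | zero => simp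
        | succ j ih => rw [pow_succ', mul_smul, ih, hx]
      have h1 : Tendsto (fun n => f ^ (k n) • x) atTop (𝓝 b) := htl.tendsto_at hxa
      have h2 : Tendsto (fun _ : ℕ => x) atTop (𝓝 x) := tendsto_const_nhds
      simp only [hpt] at h1
      exact (tendsto_nhds_unique h1 h2).symm
  · rintro (rfl | rfl)
    · exact hafix
    · exact hbfix


/-- If `f (closure U) ⊊ U` for some open `U`, then `f` is hyperbolic: it has infinite
order and exactly two fixed points in `M`. -/
theorem stmt0 {G M : Type*} [Group G] [MetricSpace M] [CompactSpace M]
    [MulAction G M] [ContinuousConstSMul G M]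
    (hconv : ConvergenceAction G M) (hne : NonElementaryAction G M)
    (f : G) (U : Set M) (hU : IsOpen U) (hsub : (f • ·) '' closure U ⊂ U) :
    ¬ IsOfFinOrder f ∧ ∃ a b : M, a ≠ b ∧ {x : M | f • x = x} = {a, b} := by
  obtain ⟨p, -, q, -, r, -, hpq, hqr, hpr⟩ := hne
  exact stmt0' hconv p q r hpq hqr hpr f U hU hsub
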